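/- Let μ = (μ₁,…,μ_s) be a partition with s ≥ 2 and μ_{s-1} > μ_s. Let μ⁺ be μ with its last part increased by 1 (still a partition). Then f(μ⁺) − f(μ) = (2μ_s + 1) f(μ⁺ − 1̂) − 2μ_s f(μ − 1̂), where ν − 1̂ subtracts 1 from every part of ν (deleting zeros). -/

import Mathlib

/-- The odd double factorial `(2k-1)!! = 1 * 3 * ... * (2k-1)`, with `odf 0 = 1`. -/
def odf (k : Nat) : Int := ∏ j ∈ Finset.Icc 1 k, (2 * (j : Int) - 1)

/-- Subtract `k` from every part, deleting parts that become zero. -/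
def subHat (k : Nat) (l : List Nat) : List Nat :=
  (l.map (fun x => x - k)).filter (fun x => x ≠ 0)

/-- `l` is a partition: a non-increasing list of positive integers. -/
def IsPartition (l : List Nat) : Prop := l.Chain' (· ≥ ·) ∧ ∀ x ∈ l, 0 < x

/-- Increase the `i`-th part (1-based indexing). -/
def upAt (i : Nat) (l : List Nat) : List Nat := l.set (i - 1) (l.getD (i - 1) 0 + 1)

/-- Decrease the `j`-th part (1-based indexing), deleting it if it becomes zero. -/
def downAt (j : Nat) (l : List Nat) : List Nat :=
  (l.set (j - 1) (l.getD (j - 1) 0 - 1)).filter (fun x => x ≠ 0)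

section helpers

lemma odf_succ (k : Nat) : odf (k+1) = odf k * (2*(k:Int)+1) := by
  unfold odf
  rw [Finset.prod_Icc_succ_top (by omega)]
  push_cast; ring

lemma odf_one : odf 1 = 1 := by simp [odf]

lemma subHat_append (k : Nat) (l l' : List Nat) :
    subHat k (l ++ l') = subHat k l ++ subHat k l' := by simp [subHat]

lemma subHat_one_eq (l : List Nat) (h : ∀ x ∈ l, 1 < x) :
    subHat 1 l = l.map (fun x => x - 1) := by
  unfold subHat
  rw [List.filter_eq_self.mpr]
  intro a ha
  simp only [List.mem_map] at ha
  obtain ⟨x, hx, rfl⟩ := ha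
  have := h x hx
  simp; omega

lemma subHat_map (k : Nat) (l : List Nat) :
    subHat k (l.map (fun x => x - 1)) = subHat (k+1) l := by
  unfold subHat
  rw [List.map_map]
  congr 1
  apply List.map_congr_left
  intro x _
  simp [Nat.sub_sub, Nat.add_comm]

lemma getD_pred (l : List Nat) (h : l ≠ []) : l.getD (l.length - 1) 0 = l.getLastD 0 := by
  induction l with
  | nil => simp at h
  | cons a t ih =>
    cases t with
    | nil => rfl
    | cons b u =>
      have := ih (by simp)
      simpa using this

lemma chain'_getLastD_le (l : List Nat) (hl : l.Chain' (· ≥ ·)) :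
    ∀ x ∈ l, l.getLastD 0 ≤ x := by
  induction l with
  | nil => simp
  | cons a t ih =>
    intro x hx
    cases t with
    | nil => simp at hx ⊢; omega
    | cons b u =>
      simp only [List.Chain'] at hl; rw [List.isChain_cons_cons] at hl
      have h2 := ih hl.2
      rcases List.mem_cons.mp hx with rfl | hx'
      · have := h2 b (by simp)
        simp only [List.getLastD_cons] at *
        omega
      · have := h2 x hx'
        simp only [List.getLastD_cons] at *
        omega

lemma choose_coeff (n i : ℕ) (hi : i < n + 1) :
    (2*(i:ℤ)+3) * (((n+1).choose (i+1) : ℕ) : ℤ)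
      = (2*(n:ℤ)+3) * (((n+1).choose (i+1) : ℕ) : ℤ)
        - (2*(n:ℤ)+2) * ((n.choose (i+1) : ℕ) : ℤ) := by
  have h1 : (n+1) * n.choose (i+1) = (n+1).choose (i+2) * (i+2) :=
    Nat.add_one_mul_choose_eq n (i+1)
  have h2 : (n+1).choose (i+2) * (i+2) = (n+1).choose (i+1) * ((n+1) - (i+1)) :=
    Nat.choose_succ_right_eq (n+1) (i+1)
  have h3 : (n+1) * n.choose (i+1) = (n+1).choose (i+1) * (n - i) := by
    rw [h1, h2]; congr 1; omega
  have h4 : ((n:ℤ)+1) * (n.choose (i+1) : ℤ) = ((n+1).choose (i+1) : ℤ) * ((n:ℤ) - i) := by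
    have := congrArg (Nat.cast (R := ℤ)) h3
    push_cast [Nat.cast_sub (by omega : i ≤ n)] at this
    linarith
  linear_combination 2 * h4

open Finset in
lemma keysum (m : ℕ) (hm : 1 ≤ m) (g : ℕ → ℤ) :
    (∑ k ∈ Icc 1 (m+1), (((m+1).choose k : ℕ) : ℤ) * odf k * g (k-1))
      - ∑ k ∈ Icc 1 m, ((m.choose k : ℕ) : ℤ) * odf k * g (k-1)
    = (2*(m:ℤ)+1) * (g 0 + ∑ k ∈ Icc 1 m, ((m.choose k : ℕ) : ℤ) * odf k * g k)
      - 2*(m:ℤ) * (g 0 + ∑ k ∈ Icc 1 (m-1), (((m-1).choose k : ℕ) : ℤ) * odf k * g k) := by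
  obtain ⟨n, rfl⟩ : ∃ n, m = n + 1 := ⟨m - 1, by omega⟩
  have icc : ∀ t : ℕ, Icc 1 t = Ico 1 (t+1) := fun t => by ext x; simp
  simp only [icc, Finset.sum_Ico_eq_sum_range, Nat.add_sub_cancel, Nat.add_sub_cancel_left]
  have h1 : ∑ x ∈ Finset.range (n + 1 + 1), (((n + 1 + 1).choose (1 + x) : ℕ) : ℤ) * odf (1 + x) * g x
      = ((∑ i ∈ Finset.range (n+1), (((n+1).choose (i+1) : ℕ):ℤ) * odf (i+2) * g (i+1))
        + (∑ i ∈ Finset.range (n+1), (((n+1).choose (i+2) : ℕ):ℤ) * odf (i+2) * g (i+1)))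
        + ((n:ℤ)+2) * g 0 := by
    rw [Finset.sum_range_succ', ← Finset.sum_add_distrib]
    congr 1
    · apply Finset.sum_congr rfl
      intro i _
      have e1 : 1 + (i+1) = i + 2 := by omega
      have e2 : (n+1+1).choose (i+2) = (n+1).choose (i+1) + (n+1).choose (i+2) :=
        Nat.choose_succ_succ (n+1) (i+1)
      rw [e1, e2]; push_cast; ring
    · have : 1 + 0 = 1 := rfl
      rw [this, Nat.choose_one_right, odf_one]; push_cast; ring
  have h2 : ∑ x ∈ Finset.range (n + 1), (((n + 1).choose (1 + x) : ℕ) : ℤ) * odf (1 + x) * g x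
      = (∑ i ∈ Finset.range n, (((n+1).choose (i+2) : ℕ):ℤ) * odf (i+2) * g (i+1)) + ((n:ℤ)+1) * g 0 := by
    rw [Finset.sum_range_succ']
    congr 1
    · apply Finset.sum_congr rfl
      intro i _
      have e1 : 1 + (i+1) = i + 2 := by omega
      rw [e1]
    · have : 1 + 0 = 1 := rfl
      rw [this, Nat.choose_one_right, odf_one]; push_cast; ring
  have h3 : ∑ i ∈ Finset.range (n+1), (((n+1).choose (i+2):ℕ):ℤ) * odf (i+2) * g (i+1)
      = ∑ i ∈ Finset.range n, (((n+1).choose (i+2):ℕ):ℤ) * odf (i+2) * g (i+1) := by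
    rw [Finset.sum_range_succ, Nat.choose_eq_zero_of_lt (by omega : n+1 < n+2)]
    simp
  have h4 : ∑ x ∈ Finset.range (n+1), ((n.choose (1+x):ℕ):ℤ) * odf (1+x) * g (1+x)
      = ∑ x ∈ Finset.range n, ((n.choose (1+x):ℕ):ℤ) * odf (1+x) * g (1+x) := by
    rw [Finset.sum_range_succ, Nat.choose_eq_zero_of_lt (by omega : n < 1+n)]
    simp
  have h5 : ∑ i ∈ Finset.range (n+1), (((n+1).choose (i+1):ℕ):ℤ) * odf (i+2) * g (i+1)
      = (2*(n:ℤ)+3) * (∑ x ∈ Finset.range (n+1), (((n+1).choose (1+x):ℕ):ℤ) * odf (1+x) * g (1+x))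
        - (2*(n:ℤ)+2) * (∑ x ∈ Finset.range (n+1), ((n.choose (1+x):ℕ):ℤ) * odf (1+x) * g (1+x)) := by
    rw [Finset.mul_sum, Finset.mul_sum, ← Finset.sum_sub_distrib]
    apply Finset.sum_congr rfl
    intro i hi
    have e1 : 1 + i = i + 1 := by omega
    have e2 : odf (i+2) = odf (i+1) * (2*(i:ℤ)+3) := by
      rw [odf_succ (i+1)]; push_cast; ring
    have hc := choose_coeff n i (Finset.mem_range.mp hi)
    rw [e1, e2]
    linear_combination (odf (i+1) * g (i+1)) * hc
  rw [h1, h2, h5, h4, h3]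
  push_cast
  ring

end helpers

theorem stmt4
    (d : Nat → Int) (hd0 : d 0 = 1) (hd1 : d 1 = 0)
    (hd : ∀ n : Nat, 2 ≤ n → d n = 2 * ((n : Int) - 1) * (d (n - 1) + d (n - 2)))
    (f : List Nat → Int) (hf0 : f [] = 1) (hf1 : ∀ m : Nat, f [m] = d m)
    (hfr : ∀ l : List Nat, IsPartition l → 2 ≤ l.length →
      f l = f l.dropLast + ∑ k ∈ Finset.Icc 1 (l.getLastD 0),
        ((l.getLastD 0).choose k : Int) * odf k * f (subHat k l.dropLast))
    (μ : List Nat) (hμ : IsPartition μ) (hs : 2 ≤ μ.length)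
    (hlt : μ.getD (μ.length - 1) 0 < μ.getD (μ.length - 2) 0) :
    f (upAt μ.length μ) - f μ
      = (2 * (μ.getLastD 0 : Int) + 1) * f (subHat 1 (upAt μ.length μ))
        - 2 * (μ.getLastD 0 : Int) * f (subHat 1 μ) := by
  set m : ℕ := μ.getLastD 0 with hmdef
  set L : List ℕ := μ.dropLast with hLdef
  have hne : μ ≠ [] := by intro h; rw [h] at hs; simp at hs
  have hμL : μ = L ++ [m] := by
    have hm' : m = μ.getLast hne := by
      rw [hmdef, List.getLastD_eq_getLast?, List.getLast?_eq_getLast hne]; rfl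
    rw [hm', hLdef]
    exact (List.dropLast_append_getLast hne).symm
  have hLlen : L.length + 1 = μ.length := by
    rw [hLdef, List.length_dropLast]; omega
  have hchain := hμ.1
  rw [hμL] at hchain; simp only [List.Chain'] at hchain; rw [List.isChain_append] at hchain
  obtain ⟨hcL, -, hlastrel⟩ := hchain
  have hm1 : 1 ≤ m := hμ.2 m (by rw [hμL]; simp)
  have hLne : L ≠ [] := by
    intro h; rw [h] at hLlen; simp at hLlen; omega
  have hgd1 : μ.getD (μ.length - 1) 0 = m := by rw [getD_pred μ hne, hmdef]
  have hgd2 : μ.getD (μ.length - 2) 0 = L.getLastD 0 := by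
    have hga := List.getD_append L [m] 0 (μ.length - 2) (by omega : μ.length - 2 < L.length)
    rw [← hμL] at hga
    have e : μ.length - 2 = L.length - 1 := by omega
    rw [hga, e, getD_pred L hLne]
  have hLlast : m < L.getLastD 0 := by rw [← hgd1, ← hgd2]; exact hlt
  have hL : ∀ x ∈ L, m + 1 ≤ x := by
    intro x hx
    have := chain'_getLastD_le L hcL x hx
    omega
  have hup : upAt μ.length μ = L ++ [m+1] := by
    unfold upAt
    rw [hgd1]
    have hset := List.set_append (i := μ.length - 1) (x := m + 1) (s := L) (t := [m])
    rw [← hμL] at hset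
    rw [hset, if_neg (by omega : ¬ (μ.length - 1 < L.length))]
    have e : μ.length - 1 - L.length = 0 := by omega
    rw [e]
    rfl
  set L' : List ℕ := L.map (fun x => x - 1) with hL'def
  have hsub1L : subHat 1 L = L' :=
    subHat_one_eq L (fun x hx => by have := hL x hx; omega)
  have hsub1up : subHat 1 (upAt μ.length μ) = L' ++ [m] := by
    rw [hup, subHat_append, hsub1L]
    congr 1
    show subHat 1 [m+1] = [m]
    simp [subHat]
    omega
  -- E2 : expansion of f μ
  have E2 := hfr μ hμ hs
  rw [← hLdef, ← hmdef] at E2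
  -- E1 : expansion of f μ⁺
  have P2 : IsPartition (L ++ [m+1]) := by
    constructor
    · simp only [List.Chain']; rw [List.isChain_append]
      refine ⟨hcL, List.isChain_singleton _, ?_⟩
      intro x hx y hy
      simp only [List.head?_cons, Option.mem_def, Option.some.injEq] at hy
      subst hy
      exact hL x (List.mem_of_mem_getLast? hx)
    · intro x hx
      rcases List.mem_append.mp hx with h | h
      · have := hL x h; omega
      · simp at h; omega
  have E1 := hfr (L ++ [m+1]) P2 (by rw [List.length_append]; simp; omega)
  rw [List.dropLast_concat, (by simp : (L ++ [m+1]).getLastD 0 = m + 1)] at E1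
  rw [← hup] at E1
  -- properties of L'
  have hL'mem : ∀ x ∈ L', m ≤ x := by
    intro x hx
    rw [hL'def] at hx
    simp only [List.mem_map] at hx
    obtain ⟨y, hy, rfl⟩ := hx
    have := hL y hy; omega
  have hcL' : L'.Chain' (· ≥ ·) := by
    simp only [List.Chain']; rw [hL'def, List.isChain_map]
    exact hcL.imp (fun {a b} hab => Nat.sub_le_sub_right hab 1)
  have hL'len : L'.length = L.length := by rw [hL'def]; simp
  have hlastL' : ∀ x ∈ L'.getLast?, x ∈ L' := fun x hx => List.mem_of_mem_getLast? hx
  -- E3 : expansion of f (subHat 1 μ⁺)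
  have P3 : IsPartition (L' ++ [m]) := by
    constructor
    · simp only [List.Chain']; rw [List.isChain_append]
      refine ⟨hcL', List.isChain_singleton _, ?_⟩
      intro x hx y hy
      simp only [List.head?_cons, Option.mem_def, Option.some.injEq] at hy
      subst hy
      exact hL'mem x (hlastL' x hx)
    · intro x hx
      rcases List.mem_append.mp hx with h | h
      · have := hL'mem x h; omega
      · simp at h; omega
  have E3 := hfr (L' ++ [m]) P3 (by rw [List.length_append, hL'len]; simp; omega)
  rw [List.dropLast_concat, (by simp : (L' ++ [m]).getLastD 0 = m)] at E3
  rw [← hsub1up] at E3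
  rw [show (∑ k ∈ Finset.Icc 1 m, (m.choose k : ℤ) * odf k * f (subHat k L'))
      = ∑ k ∈ Finset.Icc 1 m, (m.choose k : ℤ) * odf k * f (subHat (k+1) L) from
    Finset.sum_congr rfl (fun k _ => by rw [hL'def, subHat_map]), ← hsub1L] at E3
  -- E4 : expansion of f (subHat 1 μ)
  have E4 : f (subHat 1 μ) = f (subHat 1 L)
      + ∑ k ∈ Finset.Icc 1 (m-1), ((m-1).choose k : ℤ) * odf k * f (subHat (k+1) L) := by
    rcases Nat.eq_or_lt_of_le hm1 with h1 | h2
    · have hsub1μ : subHat 1 μ = L' := by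
        rw [hμL, subHat_append, hsub1L, ← h1]
        simp [subHat]
      rw [hsub1μ, ← hsub1L, ← h1]
      simp
    · have hsub1μ : subHat 1 μ = L' ++ [m-1] := by
        rw [hμL, subHat_append, hsub1L]
        congr 1
        show subHat 1 [m] = [m-1]
        simp [subHat]
        omega
      have P4 : IsPartition (L' ++ [m-1]) := by
        constructor
        · simp only [List.Chain']; rw [List.isChain_append]
          refine ⟨hcL', List.isChain_singleton _, ?_⟩
          intro x hx y hy
          simp only [List.head?_cons, Option.mem_def, Option.some.injEq] at hy
          subst hy
          have := hL'mem x (hlastL' x hx)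
          omega
        · intro x hx
          rcases List.mem_append.mp hx with h | h
          · have := hL'mem x h; omega
          · simp at h; omega
      have E4' := hfr (L' ++ [m-1]) P4 (by rw [List.length_append, hL'len]; simp; omega)
      rw [List.dropLast_concat, (by simp : (L' ++ [m-1]).getLastD 0 = m - 1)] at E4'
      rw [show (∑ k ∈ Finset.Icc 1 (m-1), ((m-1).choose k : ℤ) * odf k * f (subHat k L'))
          = ∑ k ∈ Finset.Icc 1 (m-1), ((m-1).choose k : ℤ) * odf k * f (subHat (k+1) L) from
        Finset.sum_congr rfl (fun k _ => by rw [hL'def, subHat_map])] at E4'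
      rw [hsub1μ, E4', ← hsub1L]
  -- key identity
  have key := keysum m hm1 (fun j => f (subHat (j+1) L))
  simp only [Nat.zero_add] at key
  rw [show (∑ k ∈ Finset.Icc 1 (m+1), ((m+1).choose k : ℤ) * odf k * f (subHat (k-1+1) L))
      = ∑ k ∈ Finset.Icc 1 (m+1), ((m+1).choose k : ℤ) * odf k * f (subHat k L) from
    Finset.sum_congr rfl (fun k hk => by
      have := Finset.mem_Icc.mp hk
      rw [show k - 1 + 1 = k by omega])] at key
  rw [show (∑ k ∈ Finset.Icc 1 m, (m.choose k : ℤ) * odf k * f (subHat (k-1+1) L))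
      = ∑ k ∈ Finset.Icc 1 m, (m.choose k : ℤ) * odf k * f (subHat k L) from
    Finset.sum_congr rfl (fun k hk => by
      have := Finset.mem_Icc.mp hk
      rw [show k - 1 + 1 = k by omega])] at key
  rw [E1, E2, E3, E4]
  linear_combination key
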